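/- Let (I,⪯) be a finite poset with |I| = n and let X be a finite set. For x, y ∈ X^n (with coordinates indexed by I), define d_I(x,y) = n − max{|A| : A ⊆ I ancestral and x_i = y_i for all i ∈ A}. Then d_I is a distance on X^n: d_I(x,y) ≥ 0 with equality iff x = y, d_I(x,y) = d_I(y,x), and d_I(x,z) ≤ d_I(x,y) + d_I(y,z) for all x, y, z ∈ X^n. -/

import Mathlib

open scoped Classical

/-- A subset `A` of a poset `I` is ancestral if `j ∈ A` and `j ⪯ i` imply `i ∈ A`. -/
def IsAncestral {I : Type*} [PartialOrder I] (A : Finset I) : Prop :=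
  ∀ i j : I, j ∈ A → j ≤ i → i ∈ A

/-- `dPoset x y = n − max{|A| : A ⊆ I ancestral, x i = y i for all i ∈ A}`,
where `n = |I|`. -/
noncomputable def dPoset {I : Type*} [Fintype I] [PartialOrder I] {X : Type*}
    (x y : I → X) : ℕ :=
  Fintype.card I -
    ((Finset.univ : Finset (Finset I)).filter
        (fun A => IsAncestral A ∧ ∀ i ∈ A, x i = y i)).sup Finset.card

lemma dPoset_aux {I : Type*} [Fintype I] [PartialOrder I] {X : Type*}
    (a b : I → X) :
    ∃ A : Finset I, IsAncestral A ∧ (∀ i ∈ A, a i = b i) ∧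
      ((Finset.univ : Finset (Finset I)).filter
        (fun A => IsAncestral A ∧ ∀ i ∈ A, a i = b i)).sup Finset.card = A.card := by
  have hne : ((Finset.univ : Finset (Finset I)).filter
      (fun A => IsAncestral A ∧ ∀ i ∈ A, a i = b i)).Nonempty :=
    ⟨∅, Finset.mem_filter.mpr ⟨Finset.mem_univ _, fun _ _ h _ => by simp at h, fun _ h => by simp at h⟩⟩
  obtain ⟨A, hA, hAs⟩ := Finset.exists_mem_eq_sup _ hne Finset.card
  simp only [Finset.mem_filter] at hA
  exact ⟨A, hA.2.1, hA.2.2, hAs⟩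

lemma dPoset_le_sup {I : Type*} [Fintype I] [PartialOrder I] {X : Type*}
    (a b : I → X) (A : Finset I) (h1 : IsAncestral A) (h2 : ∀ i ∈ A, a i = b i) :
    A.card ≤ ((Finset.univ : Finset (Finset I)).filter
        (fun A => IsAncestral A ∧ ∀ i ∈ A, a i = b i)).sup Finset.card :=
  Finset.le_sup (Finset.mem_filter.mpr ⟨Finset.mem_univ _, h1, h2⟩)

theorem stmt_11 {I : Type*} [Fintype I] [PartialOrder I]
    {X : Type*} [Fintype X] :
    ∀ x y z : I → X,
      0 ≤ dPoset x y ∧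
      (dPoset x y = 0 ↔ x = y) ∧
      dPoset x y = dPoset y x ∧
      dPoset x z ≤ dPoset x y + dPoset y z := by
  intro x y z
  refine ⟨Nat.zero_le _, ?_, ?_, ?_⟩
  · constructor
    · intro h
      obtain ⟨A, hA1, hA2, hA3⟩ := dPoset_aux x y
      rw [dPoset, Nat.sub_eq_zero_iff_le, hA3] at h
      have hAu : A = Finset.univ :=
        Finset.eq_univ_of_card A (le_antisymm (Finset.card_le_univ A) h)
      funext i
      exact hA2 i (hAu ▸ Finset.mem_univ i)
    · intro h
      subst h
      have := dPoset_le_sup x x Finset.univ (fun _ _ _ _ => Finset.mem_univ _)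
        (fun _ _ => rfl)
      rw [dPoset, Nat.sub_eq_zero_iff_le]
      simpa using this
  · unfold dPoset
    congr 2
    apply Finset.filter_congr
    intro A _
    constructor
    · rintro ⟨h1, h2⟩; exact ⟨h1, fun i hi => (h2 i hi).symm⟩
    · rintro ⟨h1, h2⟩; exact ⟨h1, fun i hi => (h2 i hi).symm⟩
  · obtain ⟨A, hA1, hA2, hA3⟩ := dPoset_aux x y
    obtain ⟨B, hB1, hB2, hB3⟩ := dPoset_aux y z
    have hAB1 : IsAncestral (A ∩ B) := by
      intro i j hj hle
      simp only [Finset.mem_inter] at hj ⊢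
      exact ⟨hA1 i j hj.1 hle, hB1 i j hj.2 hle⟩
    have hAB2 : ∀ i ∈ A ∩ B, x i = z i := by
      intro i hi
      simp only [Finset.mem_inter] at hi
      exact (hA2 i hi.1).trans (hB2 i hi.2)
    have hle := dPoset_le_sup x z (A ∩ B) hAB1 hAB2
    have hcard : (A ∩ B).card + (A ∪ B).card = A.card + B.card :=
      Finset.card_inter_add_card_union A B
    have hU : (A ∪ B).card ≤ Fintype.card I := Finset.card_le_univ _
    have hA : A.card ≤ Fintype.card I := Finset.card_le_univ _
    have hB : B.card ≤ Fintype.card I := Finset.card_le_univ _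
    unfold dPoset
    rw [hA3, hB3]
    omega
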